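/- Let I be a prime ideal of Q[x_1,…,x_N] and let C ⊆ {x_1,…,x_N} be a circuit of I, i.e. a subset minimal under inclusion with I ∩ Q[C] ≠ {0}. Then the elimination ideal I ∩ Q[C] is a principal ideal generated by a polynomial p_C that is irreducible over Q and whose support is exactly C; moreover p_C is unique up to multiplication by a nonzero rational constant. -/

import Mathlib

open MvPolynomial

open MvPolynomial

noncomputable section CircuitAux

variable {σ : Type*}

/-- The algebra equivalence splitting off one variable. -/
def auxEquiv [DecidableEq σ] (x : σ) :
    MvPolynomial σ ℚ ≃ₐ[ℚ] Polynomial (MvPolynomial {y : σ // y ≠ x} ℚ) :=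
  (renameEquiv ℚ (Equiv.optionSubtypeNe x).symm).trans (optionEquivLeft ℚ {y : σ // y ≠ x})

theorem auxEquiv_rename [DecidableEq σ] (x : σ) (a : MvPolynomial {y : σ // y ≠ x} ℚ) :
    auxEquiv x (rename (Subtype.val) a) = Polynomial.C a := by
  have hfun : ((Equiv.optionSubtypeNe x).symm : σ → Option {y : σ // y ≠ x}) ∘ Subtype.val =
      some := by
    funext y
    show (Equiv.optionSubtypeNe x).symm y.val = some y
    rw [Equiv.optionSubtypeNe_symm_of_ne y.2]
  show optionEquivLeft ℚ _ (rename ((Equiv.optionSubtypeNe x).symm) (rename Subtype.val a)) =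
    Polynomial.C a
  rw [rename_rename, hfun]
  induction a using MvPolynomial.induction_on with
  | C r => rw [rename_C, optionEquivLeft_C]
  | add p q hp hq => rw [map_add, map_add, hp, hq, map_add]
  | mul_X p i hp => rw [map_mul, rename_X, map_mul, hp, optionEquivLeft_X_some, map_mul]

theorem not_mem_vars_rename [DecidableEq σ] (x : σ) (a : MvPolynomial {y : σ // y ≠ x} ℚ) :
    x ∉ (rename (Subtype.val) a).vars := by
  classical
  intro h
  obtain ⟨i, _, hx⟩ := mem_vars_rename _ _ h
  exact i.2 hx

theorem exists_of_not_mem_vars [DecidableEq σ] {x : σ} {φ : MvPolynomial σ ℚ} (h : x ∉ φ.vars) :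
    ∃ a, φ = rename (Subtype.val : {y : σ // y ≠ x} → σ) a := by
  obtain ⟨a, ha⟩ := exists_rename_eq_of_vars_subset_range φ Subtype.val Subtype.val_injective
    (fun y hy => ⟨⟨y, fun (hyx : y = x) => h (by rw [← hyx]; exact Finset.mem_coe.mp hy)⟩, rfl⟩)
  exact ⟨a, ha.symm⟩

theorem mem_vars_iff_natDegree [DecidableEq σ] (x : σ) (φ : MvPolynomial σ ℚ) :
    x ∈ φ.vars ↔ (auxEquiv x φ).natDegree ≠ 0 := by
  constructor
  · intro hx hdeg
    have h := Polynomial.eq_C_of_natDegree_eq_zero hdeg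
    have hφ : φ = rename Subtype.val ((auxEquiv x φ).coeff 0) := by
      apply (auxEquiv x).injective
      rw [auxEquiv_rename, ← h]
    exact not_mem_vars_rename x _ (hφ ▸ hx)
  · intro hdeg
    by_contra hx
    obtain ⟨a, rfl⟩ := exists_of_not_mem_vars hx
    rw [auxEquiv_rename] at hdeg
    exact hdeg (Polynomial.natDegree_C a)

theorem isUnit_elim {q : MvPolynomial σ ℚ} (h : IsUnit q) :
    ∃ c : ℚ, c ≠ 0 ∧ q = C c := by
  classical
  have hvars : ∀ x : σ, x ∉ q.vars := by
    intro x hx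
    exact (mem_vars_iff_natDegree x q).1 hx
      (Polynomial.natDegree_eq_zero_of_isUnit (h.map (auxEquiv x)))
  have hq : q ∈ supported ℚ (∅ : Set σ) := by
    rw [mem_supported]
    intro y hy
    exact absurd (Finset.mem_coe.mp hy) (hvars y)
  rw [supported_empty, Algebra.mem_bot] at hq
  obtain ⟨c, hc⟩ := hq
  have hqc : q = C c := by rw [← hc]; rfl
  refine ⟨c, fun h0 => h.ne_zero ?_, hqc⟩
  rw [hqc, h0, map_zero]

theorem vars_subset_mul_left {a b : MvPolynomial σ ℚ} (hb : b ≠ 0) :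
    a.vars ⊆ (a * b).vars := by
  classical
  intro x hx
  by_cases ha : a = 0
  · rw [ha] at hx; simp [vars_0] at hx
  rw [mem_vars_iff_natDegree] at hx ⊢
  rw [map_mul, Polynomial.natDegree_mul
    ((map_ne_zero_iff _ (auxEquiv x).injective).2 ha)
    ((map_ne_zero_iff _ (auxEquiv x).injective).2 hb)]
  omega

theorem irreducible_rename {τ : Type*} (f : σ → τ) (hf : Function.Injective f)
    {g : MvPolynomial σ ℚ} (hg : Irreducible g) : Irreducible (rename f g) := by
  classical
  constructor
  · intro hu
    obtain ⟨c, hc, hgc⟩ := isUnit_elim hu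
    have hgC : g = C c := by
      have h2 := congrArg (killCompl hf) hgc
      rwa [killCompl_rename_app, killCompl_C] at h2
    exact hg.not_isUnit (hgC ▸ ((isUnit_iff_ne_zero.2 hc).map (C : ℚ →+* MvPolynomial σ ℚ)))
  · intro a b hab
    have hab0 : a * b ≠ 0 := by
      rw [← hab]
      intro h
      exact hg.ne_zero (rename_injective _ hf (h.trans (map_zero _).symm))
    obtain ⟨ha0, hb0⟩ := mul_ne_zero_iff.mp hab0
    have hsub : ∀ c : MvPolynomial τ ℚ, c.vars ⊆ (a * b).vars →
        (↑c.vars : Set τ) ⊆ Set.range f := by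
      intro c hc y hy
      have hy2 : y ∈ (rename f g).vars := hab ▸ hc (Finset.mem_coe.mp hy)
      obtain ⟨i, _, rfl⟩ := mem_vars_rename _ _ hy2
      exact ⟨i, rfl⟩
    obtain ⟨a₀, ha₀⟩ := exists_rename_eq_of_vars_subset_range a f hf
      (hsub a (vars_subset_mul_left hb0))
    obtain ⟨b₀, hb₀⟩ := exists_rename_eq_of_vars_subset_range b f hf
      (hsub b (by rw [mul_comm]; exact vars_subset_mul_left ha0))
    have hg' : g = a₀ * b₀ := by
      apply rename_injective _ hf
      rw [map_mul, ha₀, hb₀, ← hab]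
    rcases hg.isUnit_or_isUnit hg' with h | h
    · exact Or.inl (ha₀ ▸ h.map (rename f))
    · exact Or.inr (hb₀ ▸ h.map (rename f))

end CircuitAux

open scoped nonZeroDivisors

theorem circuit_core {σ : Type*} [DecidableEq σ] (x : σ) (P : Ideal (MvPolynomial σ ℚ))
    (hP : P.IsPrime) (hx : ∀ f ∈ P, f ≠ 0 → x ∈ f.vars)
    {g0 : MvPolynomial σ ℚ} (hg0P : g0 ∈ P) (hg00 : g0 ≠ 0) :
    ∃ g ∈ P, Irreducible g ∧ ∀ h ∈ P, g ∣ h := by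
  classical
  set A := MvPolynomial {y : σ // y ≠ x} ℚ with hA
  letI : NormalizationMonoid A := UniqueFactorizationMonoid.normalizationMonoid.toNormalizationMonoid
  letI : NormalizedGCDMonoid A := UniqueFactorizationMonoid.toNormalizedGCDMonoid A
  set K := FractionRing A with hK
  set P' : Ideal (Polynomial A) := P.comap ((auxEquiv x).symm :
    Polynomial A →+* MvPolynomial σ ℚ) with hP'def
  haveI := hP
  have hP' : P'.IsPrime := Ideal.IsPrime.comap _
  have hmemP' : ∀ t : Polynomial A, t ∈ P' ↔ (auxEquiv x).symm t ∈ P := fun t => Iff.rfl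
  have hK1 : ∀ a : A, Polynomial.C a ∈ P' → a = 0 := by
    intro a ha
    by_contra ha0
    have h1 : (auxEquiv x).symm (Polynomial.C a) = rename Subtype.val a := by
      apply (auxEquiv x).injective
      rw [AlgEquiv.apply_symm_apply, auxEquiv_rename]
    have h2 : rename (Subtype.val) a ∈ P := by rw [← h1]; exact (hmemP' _).1 ha
    have h3 : rename (Subtype.val) a ≠ 0 := fun h =>
      ha0 (rename_injective _ Subtype.val_injective (h.trans (map_zero _).symm))
    exact not_mem_vars_rename x a (hx _ h2 h3)
  -- get an irreducible element of P'
  have hg0'P : (auxEquiv x) g0 ∈ P' := by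
    rw [hmemP', AlgEquiv.symm_apply_apply]; exact hg0P
  have hg0'0 : (auxEquiv x) g0 ≠ 0 :=
    (map_ne_zero_iff _ (auxEquiv x).injective).2 hg00
  obtain ⟨u, hu⟩ := UniqueFactorizationMonoid.factors_prod hg0'0
  have hprod : (UniqueFactorizationMonoid.factors ((auxEquiv x) g0)).prod ∈ P' := by
    have h2 : (UniqueFactorizationMonoid.factors ((auxEquiv x) g0)).prod
        = (auxEquiv x) g0 * ↑u⁻¹ := (Units.eq_mul_inv_iff_mul_eq u).2 hu
    rw [h2]; exact Ideal.mul_mem_right _ _ hg0'P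
  obtain ⟨γ, hγfac, hγP'⟩ := (hP'.multiset_prod_mem_iff_exists_mem _).1 hprod
  have hγirr : Irreducible γ := UniqueFactorizationMonoid.irreducible_of_factor γ hγfac
  have hγd : γ.natDegree ≠ 0 := by
    intro hd
    have hC := Polynomial.eq_C_of_natDegree_eq_zero hd
    have h0 := hK1 _ (hC ▸ hγP')
    exact hγirr.ne_zero (by rw [hC, h0, map_zero])
  have hγprim : γ.IsPrimitive := by
    intro r hr
    obtain ⟨t, ht⟩ := hr
    rcases hγirr.isUnit_or_isUnit ht with h | h
    · exact Polynomial.isUnit_C.mp h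
    · exfalso
      obtain ⟨s, _, hst⟩ := Polynomial.isUnit_iff.mp h
      apply hγd
      rw [ht, ← hst, ← Polynomial.C_mul, Polynomial.natDegree_C]
  have hγK : Irreducible (γ.map (algebraMap A K)) :=
    (hγprim.irreducible_iff_irreducible_map_fraction_map).1 hγirr
  refine ⟨(auxEquiv x).symm γ, (hmemP' _).1 hγP',
    (MulEquiv.irreducible_iff ((auxEquiv x).symm : Polynomial A ≃* MvPolynomial σ ℚ)).2 hγirr,
    ?_⟩
  intro h hh
  suffices hdvd : γ ∣ (auxEquiv x) h by
    obtain ⟨t, ht⟩ := hdvd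
    exact ⟨(auxEquiv x).symm t, by rw [← map_mul, ← ht, AlgEquiv.symm_apply_apply]⟩
  rcases eq_or_ne ((auxEquiv x) h) 0 with h0 | hh0
  · rw [h0]; exact dvd_zero _
  have hh'P' : (auxEquiv x) h ∈ P' := by rw [hmemP', AlgEquiv.symm_apply_apply]; exact hh
  by_contra hnd
  have hcp : ((auxEquiv x) h).content ≠ 0 := fun hc =>
    hh0 (Polynomial.content_eq_zero_iff.mp hc)
  have hsplit := ((auxEquiv x) h).eq_C_content_mul_primPart
  have hp1P' : ((auxEquiv x) h).primPart ∈ P' := by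
    rcases hP'.mem_or_mem (hsplit ▸ hh'P') with hc | hp
    · exact absurd (hK1 _ hc) hcp
    · exact hp
  have hndK : ¬ (γ.map (algebraMap A K) ∣ ((auxEquiv x) h).primPart.map (algebraMap A K)) := by
    intro hdvdK
    have h2 := hγprim.dvd_of_fraction_map_dvd_fraction_map
      hdvdK
    exact hnd (h2.trans (Dvd.intro_left _ hsplit.symm))
  obtain ⟨a, b, hab⟩ := hγK.coprime_iff_not_dvd.mpr hndK
  obtain ⟨⟨sa, hsa⟩, ha⟩ := IsLocalization.integerNormalization_map_to_map A⁰ a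
  obtain ⟨⟨sb, hsb⟩, hb⟩ := IsLocalization.integerNormalization_map_to_map A⁰ b
  rw [Algebra.smul_def, Polynomial.algebraMap_apply] at ha hb
  set E : Polynomial A := Polynomial.C sb * IsLocalization.integerNormalization A⁰ a * γ +
    Polynomial.C sa * IsLocalization.integerNormalization A⁰ b * ((auxEquiv x) h).primPart
    with hE
  have hEP' : E ∈ P' :=
    P'.add_mem (Ideal.mul_mem_left _ _ hγP') (Ideal.mul_mem_left _ _ hp1P')
  have hmap : E.map (algebraMap A K) = Polynomial.C (algebraMap A K (sa * sb)) := by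
    rw [hE, Polynomial.map_add, Polynomial.map_mul, Polynomial.map_mul, Polynomial.map_mul,
      Polynomial.map_mul, ha, hb, Polynomial.map_C, Polynomial.map_C]
    calc Polynomial.C (algebraMap A K sb) * (Polynomial.C (algebraMap A K sa) * a) *
          Polynomial.map (algebraMap A K) γ +
        Polynomial.C (algebraMap A K sa) * (Polynomial.C (algebraMap A K sb) * b) *
          Polynomial.map (algebraMap A K) ((auxEquiv x) h).primPart
        = Polynomial.C (algebraMap A K sa) * Polynomial.C (algebraMap A K sb) *
          (a * Polynomial.map (algebraMap A K) γ +
            b * Polynomial.map (algebraMap A K) ((auxEquiv x) h).primPart) := by ring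
      _ = Polynomial.C (algebraMap A K (sa * sb)) := by
          rw [hab, mul_one, ← Polynomial.C_mul, ← map_mul]
  have hEC : E = Polynomial.C (sa * sb) :=
    Polynomial.map_injective _ (IsFractionRing.injective A K)
      (by rw [hmap, Polynomial.map_C])
  have h0 := hK1 _ (hEC ▸ hEP')
  exact mul_ne_zero (mem_nonZeroDivisors_iff_ne_zero.mp hsa)
    (mem_nonZeroDivisors_iff_ne_zero.mp hsb) h0


/-- Let `I` be a prime ideal of `ℚ[x_1,…,x_N]` and `C` a circuit of its
algebraic matroid, i.e. a subset of the variables minimal under inclusion such that the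
elimination ideal `I ∩ ℚ[C]` is nonzero.  Then `I ∩ ℚ[C]` is principal, generated by a
polynomial `p_C` irreducible over `ℚ` whose support (set of variables) is exactly `C`;
moreover `p_C` is unique up to multiplication by a nonzero rational constant. -/
theorem circuit_polynomial_principal
    (N : ℕ) (I : Ideal (MvPolynomial (Fin N) ℚ)) (hI : I.IsPrime)
    (C : Finset (Fin N))
    (hdep : ∃ f ∈ I, f ≠ 0 ∧ (f.vars : Set (Fin N)) ⊆ ↑C)
    (hmin : ∀ C' : Finset (Fin N), C' ⊂ C →
      ∀ f ∈ I, (f.vars : Set (Fin N)) ⊆ ↑C' → f = 0) :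
    ∃ p : MvPolynomial (Fin N) ℚ,
      Irreducible p ∧ p.vars = C ∧
      (∀ f : MvPolynomial (Fin N) ℚ,
        (f ∈ I ∧ (f.vars : Set (Fin N)) ⊆ ↑C) ↔
        (∃ q : MvPolynomial (Fin N) ℚ, (q.vars : Set (Fin N)) ⊆ ↑C ∧ f = q * p)) ∧
      (∀ p' : MvPolynomial (Fin N) ℚ,
        (∀ f : MvPolynomial (Fin N) ℚ,
          (f ∈ I ∧ (f.vars : Set (Fin N)) ⊆ ↑C) ↔
          (∃ q : MvPolynomial (Fin N) ℚ, (q.vars : Set (Fin N)) ⊆ ↑C ∧ f = q * p')) →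
        ∃ c : ℚ, c ≠ 0 ∧ p' = MvPolynomial.C c * p) := by
  classical
  obtain ⟨f, hfI, hf0, hfv⟩ := hdep
  -- C is nonempty
  have hCne : C.Nonempty := by
    rw [Finset.nonempty_iff_ne_empty]
    rintro rfl
    have hsupp : f ∈ supported ℚ (∅ : Set (Fin N)) := mem_supported.mpr (by simpa using hfv)
    rw [supported_empty, Algebra.mem_bot] at hsupp
    obtain ⟨c, hc⟩ := hsupp
    have hc0 : c ≠ 0 := fun h => hf0 (by rw [← hc, h, map_zero])
    exact hI.ne_top (I.eq_top_of_isUnit_mem hfI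
      (by rw [← hc]; exact (isUnit_iff_ne_zero.2 hc0).map (algebraMap ℚ _)))
  obtain ⟨x0, hx0⟩ := hCne
  set P : Ideal (MvPolynomial {y // y ∈ C} ℚ) :=
    I.comap ((rename (Subtype.val : {y // y ∈ C} → Fin N)) :
      MvPolynomial {y // y ∈ C} ℚ →ₐ[ℚ] MvPolynomial (Fin N) ℚ) with hPdef
  have hmemP : ∀ t, t ∈ P ↔ rename (Subtype.val : {y // y ∈ C} → Fin N) t ∈ I := fun t => Iff.rfl
  haveI := hI
  have hPprime : P.IsPrime := Ideal.IsPrime.comap _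
  -- every nonzero member of P has full support
  have hfull : ∀ g : MvPolynomial {y // y ∈ C} ℚ, g ∈ P → g ≠ 0 →
      ∀ x : {y // y ∈ C}, x ∈ g.vars := by
    intro g hgP hg0 x
    by_contra hx
    have hsub : ((rename (Subtype.val : {y // y ∈ C} → Fin N) g).vars : Set (Fin N)) ⊆
        ↑(C.erase x.val) := by
      intro y hy
      obtain ⟨i, hi, rfl⟩ := mem_vars_rename _ _ (Finset.mem_coe.mp hy)
      refine Finset.mem_coe.mpr (Finset.mem_erase.mpr ⟨?_, i.2⟩)
      intro hval
      exact hx ((Subtype.val_injective hval : i = x) ▸ hi)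
    have h0 : rename (Subtype.val : {y // y ∈ C} → Fin N) g = 0 :=
      hmin _ (Finset.erase_ssubset x.2) _ ((hmemP g).1 hgP) hsub
    exact hg0 (rename_injective _ Subtype.val_injective (h0.trans (map_zero _).symm))
  -- a nonzero element of P
  obtain ⟨f₀, hf₀⟩ := exists_rename_eq_of_vars_subset_range f Subtype.val Subtype.val_injective
    (by rw [Subtype.range_coe_subtype]; exact hfv)
  have hf₀P : f₀ ∈ P := (hmemP _).2 (Eq.mpr (congrArg (· ∈ I) hf₀) hfI)
  have hf₀0 : f₀ ≠ 0 := fun h => hf0 (by rw [← hf₀, h, map_zero])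
  obtain ⟨g, hgP, hgirr, hgdvd⟩ := circuit_core (⟨x0, hx0⟩ : {y // y ∈ C}) P hPprime
    (fun q hq hq0 => hfull q hq hq0 _) hf₀P hf₀0
  set p : MvPolynomial (Fin N) ℚ := rename (Subtype.val : {y // y ∈ C} → Fin N) g with hpdef
  have hpI : p ∈ I := (hmemP g).1 hgP
  have hpirr : Irreducible p := irreducible_rename _ Subtype.val_injective hgirr
  have hmemvars : ∀ y, y ∈ C → y ∈ p.vars := by
    intro y hy
    have hxg : (⟨y, hy⟩ : {y // y ∈ C}) ∈ g.vars := hfull g hgP hgirr.ne_zero _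
    rw [mem_vars] at hxg ⊢
    obtain ⟨d, hd, hyd⟩ := hxg
    refine ⟨Finsupp.mapDomain Subtype.val d, ?_, ?_⟩
    · rw [hpdef, support_rename_of_injective Subtype.val_injective]
      exact Finset.mem_image_of_mem _ hd
    · rw [Finsupp.mem_support_iff] at hyd ⊢
      have hda : Finsupp.mapDomain (Subtype.val : {y // y ∈ C} → Fin N) d
          ↑(⟨y, hy⟩ : {y // y ∈ C}) = d ⟨y, hy⟩ :=
        Finsupp.mapDomain_apply Subtype.val_injective d _
      rwa [hda]
  have hpvars : p.vars = C := by
    apply Finset.Subset.antisymm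
    · intro y hy
      obtain ⟨i, _, rfl⟩ := mem_vars_rename _ _ hy
      exact i.2
    · intro y hy
      exact hmemvars y hy
  have hiff : ∀ f' : MvPolynomial (Fin N) ℚ,
      (f' ∈ I ∧ (f'.vars : Set (Fin N)) ⊆ ↑C) ↔
      (∃ q : MvPolynomial (Fin N) ℚ, (q.vars : Set (Fin N)) ⊆ ↑C ∧ f' = q * p) := by
    intro f'
    constructor
    · rintro ⟨hf'I, hf'v⟩
      obtain ⟨f₁, hf₁⟩ := exists_rename_eq_of_vars_subset_range f' Subtype.val
        Subtype.val_injective (by rw [Subtype.range_coe_subtype]; exact hf'v)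
      obtain ⟨q₁, hq₁⟩ := hgdvd f₁ ((hmemP _).2 (Eq.mpr (congrArg (· ∈ I) hf₁) hf'I))
      refine ⟨rename Subtype.val q₁, ?_, ?_⟩
      · intro y hy
        obtain ⟨i, _, rfl⟩ := mem_vars_rename _ _ (Finset.mem_coe.mp hy)
        exact Finset.mem_coe.mpr i.2
      · rw [← hf₁, hq₁, map_mul, mul_comm]; rfl
    · rintro ⟨q, hqv, rfl⟩
      refine ⟨I.mul_mem_left q hpI, ?_⟩
      intro y hy
      rcases Finset.mem_union.mp (vars_mul _ _ (Finset.mem_coe.mp hy)) with h | h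
      · exact hqv (Finset.mem_coe.mpr h)
      · exact Finset.mem_coe.mpr (hpvars ▸ h)
  refine ⟨p, hpirr, hpvars, hiff, ?_⟩
  intro p' hiff'
  have hp'mem : p' ∈ I ∧ (p'.vars : Set (Fin N)) ⊆ ↑C :=
    (hiff' p').mpr ⟨1, by simp, (one_mul p').symm⟩
  obtain ⟨q, hqv, hq⟩ := (hiff p').mp hp'mem
  obtain ⟨q', _, hq'⟩ := (hiff' p).mp ⟨hpI, by rw [hpvars]⟩
  have hp0 : p ≠ 0 := hpirr.ne_zero
  have hqq' : q' * q = 1 :=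
    mul_right_cancel₀ hp0 (by rw [one_mul, mul_assoc, ← hq, ← hq'])
  obtain ⟨c, hc0, hc⟩ := isUnit_elim (IsUnit.of_mul_eq_one q' (by rw [mul_comm]; exact hqq'))
  exact ⟨c, hc0, by rw [hq, hc]⟩
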